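/- Let p be a prime and let f ∈ F_p[X] have degree n > 0. Let (b_i)_{i=0}^{s} (each b_i ∈ {0,1}) be the binary digits of p, so p = Σ_{i=0}^{s} b_i·2^i. Suppose we are given polynomials h_0, …, h_n in F_p[X], an n×s matrix (g_{ij}) over F_p[X], an n×(s+1) matrix (h′_{ij}) over F_p[X], and tuples (a_0, …, a_{n−1}) and (b′_0, …, b′_{n−1}) over F_p[X] satisfying: (i) for all 0 ≤ i < n, h′_{is} = h_i^(b_s) and h′_{i0} = h_{i+1}; (ii) for all 0 ≤ i < n and 0 ≤ j < s, f·g_{ij} = (h′_{i(j+1)})^2 · h_i^(b_j) − h′_{ij}; (iii) h_0 = X and h_n = X; (iv) for every prime t dividing n, a_{n/t}·f + b′_{n/t}·(h_{n/t} − X) = 1. Then f is irreducible in F_p[X]. -/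

import Mathlib

open Polynomial

private lemma nat_dvd_of_pow_sub_one_dvd {p d n : ℕ} (hp : 2 ≤ p) (hd : 0 < d)
    (hdvd : p ^ d - 1 ∣ p ^ n - 1) : d ∣ n := by
  have hrd : n % d < d := Nat.mod_lt _ hd
  have h1 : p ^ n = p ^ (n % d) * p ^ (d * (n / d)) := by
    rw [← pow_add]; congr 1; exact (Nat.mod_add_div n d).symm
  have h2 : p ^ d - 1 ∣ p ^ (d * (n / d)) - 1 := Nat.pow_sub_one_dvd_pow_sub_one p (dvd_mul_right d (n / d))
  have hA : 1 ≤ p ^ (n % d) := Nat.one_le_pow _ _ (by omega)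
  have hB : 1 ≤ p ^ (d * (n / d)) := Nat.one_le_pow _ _ (by omega)
  have h3 : p ^ (n % d) - 1 =
      (p ^ n - 1) - p ^ (n % d) * (p ^ (d * (n / d)) - 1) := by
    have e : p ^ (n % d) * (p ^ (d * (n / d)) - 1)
        = p ^ (n % d) * p ^ (d * (n / d)) - p ^ (n % d) := by
      rw [Nat.mul_sub, mul_one]
    have hle : p ^ (n % d) ≤ p ^ (n % d) * p ^ (d * (n / d)) :=
      Nat.le_mul_of_pos_right _ (by omega)
    omega
  have key : p ^ d - 1 ∣ p ^ (n % d) - 1 := by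
    rw [h3]; exact Nat.dvd_sub hdvd (Dvd.dvd.mul_left h2 _)
  have hlt : p ^ (n % d) < p ^ d := Nat.pow_lt_pow_right (by omega) hrd
  have h0 : p ^ (n % d) - 1 = 0 := by
    by_contra h0
    have := Nat.le_of_dvd (Nat.pos_of_ne_zero h0) key
    omega
  have : n % d = 0 := by
    rcases Nat.eq_zero_or_pos (n % d) with h | h
    · exact h
    · exfalso; have := Nat.one_lt_pow (by omega : n % d ≠ 0) hp; omega
  exact Nat.dvd_of_mod_eq_zero this

private lemma rabin_test (p : ℕ) [Fact p.Prime] (f : Polynomial (ZMod p))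
    (hn : 0 < f.natDegree)
    (hdvd : f ∣ X ^ p ^ f.natDegree - X)
    (hcop : ∀ t : ℕ, t.Prime → t ∣ f.natDegree →
      IsCoprime f (X ^ p ^ (f.natDegree / t) - X)) :
    Irreducible f := by
  have hprime : p.Prime := Fact.out
  set n := f.natDegree with hn'
  have hf0 : f ≠ 0 := fun hh => by rw [hn', hh, natDegree_zero] at hn; omega
  have hfu : ¬ IsUnit f := fun hh => by
    have := Polynomial.natDegree_eq_zero_of_isUnit hh; omega
  obtain ⟨g, hgm, hgi, hgf⟩ := Polynomial.exists_monic_irreducible_factor f hfu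
  haveI : Fact (Irreducible g) := ⟨hgi⟩
  set d := g.natDegree with hd'
  have hg0 : g ≠ 0 := hgi.ne_zero
  have hd : 0 < d := natDegree_pos_iff_degree_pos.mpr (degree_pos_of_irreducible hgi)
  set F := AdjoinRoot g with hF
  set x : F := AdjoinRoot.root g with hx
  haveI : CharP F p := charP_of_injective_algebraMap (algebraMap (ZMod p) F).injective p
  have hxn : x ^ p ^ n = x := by
    have h1 : AdjoinRoot.mk g (X ^ p ^ n - X) = 0 :=
      AdjoinRoot.mk_eq_zero.2 (hgf.trans hdvd)
    rw [map_sub, map_pow, AdjoinRoot.mk_X] at h1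
    exact sub_eq_zero.mp h1
  have pb := AdjoinRoot.powerBasis hg0
  haveI : Module.Finite (ZMod p) F := Module.Finite.of_basis pb.basis
  haveI : Finite F := Module.finite_of_finite (ZMod p)
  haveI : Fintype F := Fintype.ofFinite F
  have hcard : Fintype.card F = p ^ d := by
    rw [Module.card_eq_pow_finrank (K := ZMod p), ZMod.card,
      (AdjoinRoot.powerBasis hg0).finrank, AdjoinRoot.powerBasis_dim]
  -- every element of F is fixed by y ↦ y ^ p ^ n
  have hfix : ∀ y : F, y ^ p ^ n = y := by
    have key : (iterateFrobenius F p n).comp (AdjoinRoot.mk g) =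
        (AdjoinRoot.mk g : (ZMod p)[X] →+* F) := by
      apply Polynomial.ringHom_ext
      · intro c
        show (AdjoinRoot.mk g) (Polynomial.C c) ^ p ^ n = (AdjoinRoot.mk g) (Polynomial.C c)
        rw [← map_pow, ← Polynomial.C_pow, ZMod.pow_card_pow]
      · simp only [RingHom.comp_apply, iterateFrobenius_def, AdjoinRoot.mk_X]
        exact hxn
    intro y
    obtain ⟨q, rfl⟩ := AdjoinRoot.mk_surjective y
    have := congrFun (congrArg (fun r => r.toFun) key) q
    simpa [iterateFrobenius_def] using this
  -- d ∣ n via a generator of the unit group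
  have hdn : d ∣ n := by
    obtain ⟨y, hy⟩ := IsCyclic.exists_generator (α := Fˣ)
    have hyord : orderOf y = p ^ d - 1 := by
      rw [orderOf_eq_card_of_forall_mem_zpowers hy, Nat.card_units, Nat.card_eq_fintype_card, hcard]
    have hyfix : y ^ p ^ n = y := by
      ext
      push_cast
      exact hfix (y : F)
    have hy1 : y ^ (p ^ n - 1) = 1 := by
      have hpos : 1 ≤ p ^ n := Nat.one_le_pow _ _ hprime.pos
      have : y ^ (p ^ n - 1) * y = 1 * y := by
        rw [← pow_succ, one_mul]
        rw [Nat.sub_add_cancel hpos]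
        exact hyfix
      exact mul_right_cancel this
    have := orderOf_dvd_of_pow_eq_one hy1
    rw [hyord] at this
    exact nat_dvd_of_pow_sub_one_dvd hprime.two_le hd this
  by_cases hdn' : d = n
  · -- g and f have the same degree, so f is a unit multiple of g
    obtain ⟨c, rfl⟩ := hgf
    have hc0 : c ≠ 0 := fun hh => hf0 (by rw [hh, mul_zero])
    have hcdeg : c.natDegree = 0 := by
      have := natDegree_mul hg0 hc0
      omega
    have hcu : IsUnit c := by
      rw [Polynomial.eq_C_of_natDegree_eq_zero hcdeg]
      exact isUnit_C.2 (IsUnit.mk0 _ (by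
        intro hh
        apply hc0
        rw [Polynomial.eq_C_of_natDegree_eq_zero hcdeg, hh, map_zero]))
    exact (associated_mul_unit_right g c hcu).irreducible hgi
  · exfalso
    have hlt : d < n := lt_of_le_of_ne (Nat.le_of_dvd hn hdn) hdn'
    set k := n / d with hk'
    have hdk : d * k = n := Nat.mul_div_cancel' hdn
    have hk1 : 1 < k := by
      rcases Nat.lt_or_ge k 2 with hh | hh
      · interval_cases k <;> omega
      · omega
    set t := k.minFac with ht'
    have ht : t.Prime := Nat.minFac_prime (by omega)
    have htk : t ∣ k := Nat.minFac_dvd k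
    have htn : t ∣ n := htk.trans (Dvd.intro_left d hdk)
    obtain ⟨m, hm⟩ := htk
    have hnt : n / t = d * m := by
      have hne : n = (d * m) * t := by rw [← hdk, hm]; ring
      rw [hne, Nat.mul_div_cancel _ ht.pos]
    have hxm : x ^ p ^ (n / t) = x := by
      rw [hnt, pow_mul, ← hcard]
      exact FiniteField.pow_card_pow m x
    have hgdvd : g ∣ X ^ p ^ (n / t) - X := by
      rw [← AdjoinRoot.mk_eq_zero, map_sub, map_pow, AdjoinRoot.mk_X]
      rw [show AdjoinRoot.root g = x from rfl, hxm, sub_self]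
    exact hgi.not_isUnit ((hcop t ht htn).isUnit_of_dvd' hgf hgdvd)

/-- **Soundness of the irreducibility certificate over `F_p`.** Given the certifying
data `h`, `h'`, `g`, `a`, `b'` satisfying the verification conditions (i)–(iv),
the polynomial `f : (ZMod p)[X]` of degree `n > 0` is irreducible. -/
theorem irreducible_of_certificate (p : ℕ) [Fact p.Prime]
    (f : Polynomial (ZMod p)) (hn : 0 < f.natDegree)
    (s : ℕ) (b : ℕ → ℕ) (hb : ∀ i ≤ s, b i = 0 ∨ b i = 1)
    (hp : p = ∑ i ∈ Finset.range (s + 1), b i * 2 ^ i)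
    (h : ℕ → Polynomial (ZMod p))
    (h' : ℕ → ℕ → Polynomial (ZMod p))
    (g : ℕ → ℕ → Polynomial (ZMod p))
    (a b' : ℕ → Polynomial (ZMod p))
    -- (i)
    (hi : ∀ i < f.natDegree, h' i s = (h i) ^ (b s) ∧ h' i 0 = h (i + 1))
    -- (ii)
    (hii : ∀ i < f.natDegree, ∀ j < s,
      f * g i j = (h' i (j + 1)) ^ 2 * (h i) ^ (b j) - h' i j)
    -- (iii)
    (hiii : h 0 = X ∧ h f.natDegree = X)
    -- (iv)
    (hiv : ∀ t : ℕ, t.Prime → t ∣ f.natDegree →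
      a (f.natDegree / t) * f + b' (f.natDegree / t) * (h (f.natDegree / t) - X) = 1) :
    Irreducible f := by
  set n := f.natDegree with hn'
  -- quotient ring modulo f
  let I : Ideal (Polynomial (ZMod p)) := Ideal.span {f}
  let π : Polynomial (ZMod p) →+* (Polynomial (ZMod p) ⧸ I) := Ideal.Quotient.mk I
  have hfd : ∀ u v : Polynomial (ZMod p), π u = π v ↔ f ∣ u - v := by
    intro u v
    rw [Ideal.Quotient.mk_eq_mk_iff_sub_mem, Ideal.mem_span_singleton]
  -- partial sums of the binary expansion
  set e : ℕ → ℕ := fun j => ∑ k ∈ Finset.Ico j (s + 1), b k * 2 ^ (k - j) with he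
  have he_s : e s = b s := by
    have hico : Finset.Ico s (s + 1) = {s} := by rw [Finset.Ico_add_one_right_eq_Icc, Finset.Icc_self]
    simp [he, hico]
  have he_step : ∀ j < s, e j = 2 * e (j + 1) + b j := by
    intro j hj
    have h1 : e j = b j * 2 ^ (j - j) + ∑ k ∈ Finset.Ico (j + 1) (s + 1), b k * 2 ^ (k - j) :=
      Finset.sum_eq_sum_Ico_succ_bot (by omega) _
    have h2 : ∑ k ∈ Finset.Ico (j + 1) (s + 1), b k * 2 ^ (k - j)
        = 2 * ∑ k ∈ Finset.Ico (j + 1) (s + 1), b k * 2 ^ (k - (j + 1)) := by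
      rw [Finset.mul_sum]
      refine Finset.sum_congr rfl fun k hk => ?_
      have hk' : j + 1 ≤ k := (Finset.mem_Ico.mp hk).1
      have : k - j = (k - (j + 1)) + 1 := by omega
      rw [this, pow_succ]; ring
    rw [h1, h2, he]; simp; ring
  have he_zero : e 0 = p := by
    rw [he, hp]
    simp only [Nat.sub_zero]
    rw [Finset.range_eq_Ico]
  -- step A : the square-and-multiply chain
  have stepA : ∀ i < n, ∀ j, j ≤ s → π (h' i j) = π (h i) ^ e j := by
    intro i hilt
    have key : ∀ m : ℕ, ∀ j, j ≤ s → s - j = m → π (h' i j) = π (h i) ^ e j := by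
      intro m
      induction m with
      | zero =>
        intro j hj hm
        have : j = s := by omega
        subst this
        rw [(hi i hilt).1, map_pow, he_s]
      | succ m ih =>
        intro j hj hm
        have hjs : j < s := by omega
        have hdvd : f ∣ (h' i (j + 1)) ^ 2 * (h i) ^ (b j) - h' i j :=
          ⟨g i j, (hii i hilt j hjs).symm⟩
        have h1' : π ((h' i (j + 1)) ^ 2 * (h i) ^ (b j)) = π (h' i j) := (hfd _ _).mpr hdvd
        rw [← h1', map_mul, map_pow, map_pow, ih (j + 1) (by omega) (by omega),
          he_step j hjs, ← pow_mul, ← pow_add]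
        ring_nf
    intro j hj
    exact key (s - j) j hj rfl
  -- step B : h (i+1) ≡ (h i)^p
  have stepB : ∀ i < n, π (h (i + 1)) = π (h i) ^ p := by
    intro i hilt
    rw [← (hi i hilt).2, stepA i hilt 0 (Nat.zero_le s), he_zero]
  -- step C : h i ≡ X ^ p ^ i
  have stepC : ∀ i ≤ n, π (h i) = π X ^ p ^ i := by
    intro i
    induction i with
    | zero => intro _; rw [hiii.1, pow_zero, pow_one]
    | succ i ih =>
      intro hile
      rw [stepB i (by omega), ih (by omega), ← pow_mul, ← pow_succ]
  -- f divides X^(p^n) - X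
  have hdvd : f ∣ X ^ p ^ n - X := by
    rw [← hfd, map_pow]
    rw [← stepC n le_rfl, hiii.2]
  -- coprimality hypotheses
  have hcop : ∀ t : ℕ, t.Prime → t ∣ n → IsCoprime f (X ^ p ^ (n / t) - X) := by
    intro t ht htn
    set m := n / t with hm
    have hmn : m ≤ n := Nat.div_le_self n t
    have hdm : f ∣ h m - X ^ p ^ m := by
      rw [← hfd, map_pow]
      exact stepC m hmn
    obtain ⟨c, hc⟩ := hdm
    refine ⟨a m + b' m * c, b' m, ?_⟩
    have hiv' := hiv t ht htn
    rw [← hm] at hiv'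
    linear_combination hiv' - (b' m) * hc
  exact rabin_test p f hn hdvd hcop
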